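/- The function z ↦ F'(z)/F(z) is negative and strictly increasing on (0,∞): for all 0 < z₁ < z₂ one has F'(z₁)/F(z₁) < F'(z₂)/F(z₂) < 0. -/

import Mathlib

open Real Set

/-- `F(z) = Γ(z+3/4)/(Γ(z+1/4)·√z)`. -/
noncomputable def F (z : ℝ) : ℝ :=
  Real.Gamma (z + 3/4) / (Real.Gamma (z + 1/4) * Real.sqrt z)

open Filter Topology


noncomputable def LG : ℝ → ℝ := fun x => Real.log (Real.Gamma x)
noncomputable def D : ℝ → ℝ := deriv LG

lemma hLGdiff {x : ℝ} (hx : 0 < x) : DifferentiableAt ℝ LG x := by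
  refine ((Real.differentiableAt_Gamma ?_).log (Real.Gamma_ne_zero ?_)) <;>
  · intro m
    have : (0:ℝ) ≤ (m:ℝ) := Nat.cast_nonneg m
    exact ne_of_gt (by linarith)

lemma hD_rec {x : ℝ} (hx : 0 < x) : D (x + 1) = D x + 1 / x := by
  have h_rec : ∀ y : ℝ, 0 < y → LG (y + 1) = LG y + Real.log y := by
    intro y hy
    simp only [LG, Real.Gamma_add_one hy.ne',
      Real.log_mul hy.ne' (Real.Gamma_pos_of_pos hy).ne', add_comm]
  rw [D, ← deriv_comp_add_const, one_div, ← Real.deriv_log,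
    ← deriv_add (hLGdiff (by positivity)) (Real.differentiableAt_log hx.ne')]
  apply Filter.EventuallyEq.deriv_eq
  filter_upwards [eventually_gt_nhds hx] using fun y hy => h_rec y hy

lemma hD_mono : MonotoneOn D (Set.Ioi (0:ℝ)) :=
  Real.convexOn_log_Gamma.monotoneOn_deriv (fun x hx => hLGdiff hx)

lemma hD_nat {x : ℝ} (hx : 0 < x) (n : ℕ) :
    D (x + n) = D x + ∑ k ∈ Finset.range n, 1 / (x + k) := by
  induction n with
  | zero => simp
  | succ n ih =>
    have h1 : x + (n + 1 : ℕ) = (x + n) + 1 := by push_cast; ring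
    rw [h1, hD_rec (by positivity), ih, Finset.sum_range_succ]
    ring

lemma tendsto_D_diff {x : ℝ} (hx : 0 < x) :
    Tendsto (fun n : ℕ => D (x + 1/2 + n) - D (x + n)) atTop (𝓝 0) := by
  have hub : ∀ n : ℕ, D (x + 1/2 + n) - D (x + n) ≤ 1 / (x + n) := by
    intro n
    have h1 : D (x + 1/2 + n) ≤ D (x + n + 1) := by
      apply hD_mono (by simp [Set.mem_Ioi]; positivity) (by simp [Set.mem_Ioi]; positivity)
      linarith
    have h2 : D (x + n + 1) = D (x + n) + 1 / (x + n) := hD_rec (by positivity)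
    linarith
  have hlb : ∀ n : ℕ, 0 ≤ D (x + 1/2 + n) - D (x + n) := by
    intro n
    have : D (x + n) ≤ D (x + 1/2 + n) := by
      apply hD_mono (by simp [Set.mem_Ioi]; positivity) (by simp [Set.mem_Ioi]; positivity)
      linarith
    linarith
  have htop : Tendsto (fun n : ℕ => x + (n:ℝ)) atTop atTop :=
    tendsto_atTop_add_const_left _ _ tendsto_natCast_atTop_atTop
  have h0 : Tendsto (fun n : ℕ => 1 / (x + (n:ℝ))) atTop (𝓝 0) := by
    have := htop.inv_tendsto_atTop
    simp only [one_div]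
    exact this
  exact squeeze_zero hlb hub h0

lemma hasSum_D_diff {x : ℝ} (hx : 0 < x) :
    HasSum (fun k : ℕ => 1 / (x + k) - 1 / (x + 1/2 + k)) (D (x + 1/2) - D x) := by
  have hnn : ∀ k : ℕ, 0 ≤ 1 / (x + k) - 1 / (x + 1/2 + k) := by
    intro k
    have h1 : (0:ℝ) < x + k := by positivity
    have h2 : x + k < x + 1/2 + k := by linarith
    have := one_div_le_one_div_of_le h1 h2.le
    linarith
  rw [hasSum_iff_tendsto_nat_of_nonneg hnn]
  have key : ∀ n : ℕ, ∑ k ∈ Finset.range n, (1 / (x + k) - 1 / (x + 1/2 + k))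
      = (D (x + 1/2) - D x) - (D (x + 1/2 + n) - D (x + n)) := by
    intro n
    rw [Finset.sum_sub_distrib]
    have e1 : D (x + n) = D x + ∑ k ∈ Finset.range n, 1 / (x + k) := hD_nat hx n
    have e2 : D (x + 1/2 + n) = D (x + 1/2) + ∑ k ∈ Finset.range n, 1 / (x + 1/2 + k) :=
      hD_nat (by positivity) n
    linarith
  simp_rw [key]
  have := (tendsto_D_diff hx).const_sub (D (x + 1/2) - D x)
  simpa using this

lemma hasSum_telescope {z : ℝ} (hz : 0 < z) :
    HasSum (fun k : ℕ => (1/2) * (1 / (z + k) - 1 / (z + k + 1))) (1 / (2 * z)) := by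
  have hnn : ∀ k : ℕ, 0 ≤ (1/2) * (1 / (z + k) - 1 / (z + k + 1)) := by
    intro k
    have h1 : (0:ℝ) < z + k := by positivity
    have := one_div_le_one_div_of_le h1 (by linarith : z + k ≤ z + k + 1)
    linarith
  rw [hasSum_iff_tendsto_nat_of_nonneg hnn]
  have key : ∀ n : ℕ, ∑ k ∈ Finset.range n, (1/2) * (1 / (z + k) - 1 / (z + k + 1))
      = 1 / (2 * z) - (1/2) * (1 / (z + n)) := by
    intro n
    rw [← Finset.mul_sum]
    have : ∑ k ∈ Finset.range n, (1 / (z + k) - 1 / (z + k + 1))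
        = 1 / (z + (0:ℕ)) - 1 / (z + n) := by
      have := Finset.sum_range_sub' (fun k : ℕ => 1 / (z + k)) n
      simp only [← this]
      apply Finset.sum_congr rfl
      intro k _
      push_cast
      ring_nf
    rw [this]
    push_cast
    field_simp
    ring
  simp_rw [key]
  have htop : Tendsto (fun n : ℕ => z + (n:ℝ)) atTop atTop :=
    tendsto_atTop_add_const_left _ _ tendsto_natCast_atTop_atTop
  have h0 : Tendsto (fun n : ℕ => (1/2) * (1 / (z + (n:ℝ)))) atTop (𝓝 0) := by
    have := htop.inv_tendsto_atTop
    have := this.const_mul (1/2 : ℝ)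
    simpa [one_div] using this
  have := h0.const_sub (1 / (2 * z))
  simpa using this

noncomputable def φ (b : ℝ) : ℝ :=
  (1 / (b + 1/4) - 1 / (b + 3/4)) - (1/2) * (1 / b - 1 / (b + 1))

noncomputable def g (z : ℝ) : ℝ := D (z + 3/4) - D (z + 1/4) - 1 / (2 * z)

lemma hasSum_g {z : ℝ} (hz : 0 < z) : HasSum (fun k : ℕ => φ (z + k)) (g z) := by
  have h1 := hasSum_D_diff (x := z + 1/4) (by positivity)
  have h2 := hasSum_telescope hz
  have h3 := h1.sub h2
  have e : (z + 1/4 + 1/2) = z + 3/4 := by ring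
  rw [e] at h3
  have efun : (fun k : ℕ => φ (z + k)) = (fun k : ℕ =>
      1 / (z + 1/4 + k) - 1 / (z + 3/4 + k) - 1/2 * (1 / (z + k) - 1 / (z + k + 1))) := by
    funext k
    unfold φ
    ring_nf
  rw [g, efun]
  exact h3


lemma F_pos {z : ℝ} (hz : 0 < z) : 0 < F z := by
  unfold F
  have h1 : 0 < Real.Gamma (z + 3/4) := Real.Gamma_pos_of_pos (by positivity)
  have h2 : 0 < Real.Gamma (z + 1/4) := Real.Gamma_pos_of_pos (by positivity)
  have h3 : 0 < Real.sqrt z := Real.sqrt_pos.mpr hz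
  positivity

lemma diffGamma {c z : ℝ} (h : 0 < z + c) :
    DifferentiableAt ℝ (fun w : ℝ => Real.Gamma (w + c)) z := by
  have : DifferentiableAt ℝ Real.Gamma (z + c) := by
    apply Real.differentiableAt_Gamma
    intro m
    have : (0:ℝ) ≤ (m:ℝ) := Nat.cast_nonneg m
    exact ne_of_gt (by linarith)
  exact DifferentiableAt.comp (g := Real.Gamma) (f := fun w : ℝ => w + c) z this
    (differentiableAt_id.add_const c)

lemma F_diff {z : ℝ} (hz : 0 < z) : DifferentiableAt ℝ F z := by
  unfold F
  have h2 : 0 < Real.Gamma (z + 1/4) := Real.Gamma_pos_of_pos (by positivity)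
  have h3 : 0 < Real.sqrt z := Real.sqrt_pos.mpr hz
  exact (diffGamma (by linarith)).div ((diffGamma (by linarith)).mul
    (differentiableAt_id.sqrt hz.ne')) (by positivity)

lemma deriv_div_F {z : ℝ} (hz : 0 < z) : deriv F z / F z = g z := by
  have hF := F_diff hz
  have hFpos := F_pos hz
  have hlog : deriv (fun w => Real.log (F w)) z = deriv F z / F z :=
    deriv.log hF hFpos.ne'
  rw [← hlog]
  -- now compute deriv of log ∘ F
  have heq : (fun w => Real.log (F w)) =ᶠ[𝓝 z]
      (fun w => LG (w + 3/4) - LG (w + 1/4) - (1/2) * Real.log w) := by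
    filter_upwards [eventually_gt_nhds hz] with w hw
    have h1 : 0 < Real.Gamma (w + 3/4) := Real.Gamma_pos_of_pos (by positivity)
    have h2 : 0 < Real.Gamma (w + 1/4) := Real.Gamma_pos_of_pos (by positivity)
    have h3 : 0 < Real.sqrt w := Real.sqrt_pos.mpr hw
    unfold F LG
    rw [Real.log_div h1.ne' (by positivity), Real.log_mul h2.ne' h3.ne',
      Real.log_sqrt hw.le]
    ring
  rw [heq.deriv_eq]
  have d1 : HasDerivAt (fun w : ℝ => LG (w + 3/4)) (D (z + 3/4)) z := by
    have : HasDerivAt LG (D (z + 3/4)) (z + 3/4) := (hLGdiff (by positivity)).hasDerivAt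
    simpa using this.comp_add_const
  have d2 : HasDerivAt (fun w : ℝ => LG (w + 1/4)) (D (z + 1/4)) z := by
    have : HasDerivAt LG (D (z + 1/4)) (z + 1/4) := (hLGdiff (by positivity)).hasDerivAt
    simpa using this.comp_add_const
  have d3 : HasDerivAt (fun w : ℝ => (1/2) * Real.log w) (1 / (2 * z)) z := by
    have := (Real.hasDerivAt_log hz.ne').const_mul (1/2 : ℝ)
    exact this.congr_deriv (by ring)
  have := ((d1.sub d2).sub d3).deriv
  refine this.trans ?_
  rfl

lemma phi_eq {b : ℝ} (hb : 0 < b) :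
    φ b = -(3/32) / ((b^2 + b) * (b^2 + b + 3/16)) := by
  unfold φ
  have h1 : b + 1/4 ≠ 0 := by positivity
  have h2 : b + 3/4 ≠ 0 := by positivity
  have h3 : b + 1 ≠ 0 := by positivity
  have h4 : b^2 + b ≠ 0 := by positivity
  have h5 : b^2 + b + 3/16 ≠ 0 := by positivity
  field_simp
  ring

lemma phi_neg {b : ℝ} (hb : 0 < b) : φ b < 0 := by
  rw [phi_eq hb]
  apply div_neg_of_neg_of_pos (by norm_num)
  positivity

lemma phi_mono {a b : ℝ} (ha : 0 < a) (hab : a < b) : φ a < φ b := by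
  rw [phi_eq ha, phi_eq (ha.trans hab)]
  rw [neg_div, neg_div, neg_lt_neg_iff]
  have hb : 0 < b := ha.trans hab
  apply div_lt_div_of_pos_left (by norm_num)
  · positivity
  · have huv : a^2 + a < b^2 + b := by nlinarith
    nlinarith [mul_pos (sub_pos.mpr huv)
      (show (0:ℝ) < (b^2 + b) + (a^2 + a) + 3/16 by positivity)]

/-- The function `z ↦ F'(z)/F(z)` is negative and strictly increasing
on `(0,∞)`: for all `0 < z₁ < z₂`, `F'(z₁)/F(z₁) < F'(z₂)/F(z₂) < 0`. -/
theorem stmt13 :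
    ∀ z₁ z₂ : ℝ, 0 < z₁ → z₁ < z₂ →
      deriv F z₁ / F z₁ < deriv F z₂ / F z₂ ∧ deriv F z₂ / F z₂ < 0 := by
  intro z₁ z₂ h1 h12
  have h2 : 0 < z₂ := h1.trans h12
  have s1 := hasSum_g h1
  have s2 := hasSum_g h2
  rw [deriv_div_F h1, deriv_div_F h2]
  constructor
  · refine hasSum_lt (i := 0) (fun k => ?_) ?_ s1 s2
    · exact (phi_mono (by positivity) (by linarith)).le
    · exact phi_mono (by simpa using h1) (by simpa using h12)
  · refine hasSum_lt (i := 0) (g := fun _ : ℕ => (0:ℝ)) (fun k => ?_) ?_ s2 hasSum_zero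
    · exact (phi_neg (by positivity)).le
    · simpa using phi_neg h2
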